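/- Let K be a closed connected set with H¹(K ∩ B(x₀,3r)) ≤ (11/10)·(3r), let y, z ∈ K ∩ ∂B(x₀,r), and let Γ ⊆ K be a geodesic curve in K connecting y and z. Then Γ ⊆ B(x₀,3r). Consequently H¹(Γ) ≤ H¹(K ∩ B(x₀,3r)) ≤ 4r. -/

import Mathlib

open MeasureTheory Metric Set
open scoped ENNReal

/-- Boundary bumping: in a compact connected T2 space, the connected component inside a
closed proper subset of any of its points meets the frontier of that subset. -/
lemma bump_lemma {X : Type*} [TopologicalSpace X] [CompactSpace X] [T2Space X]
    [ConnectedSpace X] {F : Set X} (hF : IsClosed F) (hFne : F ≠ Set.univ) {a : X}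
    (ha : a ∈ F) : (connectedComponentIn F a ∩ frontier F).Nonempty := by
  by_contra hcon
  rw [Set.not_nonempty_iff_eq_empty] at hcon
  haveI : CompactSpace F := isCompact_iff_compactSpace.mp hF.isCompact
  set a' : F := ⟨a, ha⟩ with ha'
  set B : Set F := Subtype.val ⁻¹' frontier F with hB
  have hBc : IsCompact B :=
    (isClosed_frontier.preimage continuous_subtype_val).isCompact
  have hcc : connectedComponent a' ∩ B = ∅ := by
    rw [Set.eq_empty_iff_forall_notMem]
    rintro x ⟨hx1, hx2⟩
    have hmem : (x : X) ∈ connectedComponentIn F a ∩ frontier F := by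
      refine ⟨?_, hx2⟩
      rw [connectedComponentIn_eq_image ha]
      exact ⟨x, hx1, rfl⟩
    rw [hcon] at hmem
    exact hmem
  -- find a clopen set in `F` containing `a'` and missing `B`
  have H1 := hBc.inter_iInter_nonempty
    (fun s : { s : Set F // IsClopen s ∧ a' ∈ s } => (s : Set F)) (fun s => s.2.1.1)
  have Hne : ¬ (B ∩ ⋂ s : { s : Set F // IsClopen s ∧ a' ∈ s }, (s : Set F)).Nonempty := by
    rw [← connectedComponent_eq_iInter_isClopen a', Set.inter_comm, hcc]
    simp
  obtain ⟨t, ht⟩ : ∃ t : Finset { s : Set F // IsClopen s ∧ a' ∈ s },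
      ¬ (B ∩ ⋂ s ∈ t, (s : Set F)).Nonempty := by
    by_contra h
    push_neg at h
    exact Hne (H1 (fun u => h u))
  set U : Set F := ⋂ s ∈ t, (s : Set F) with hU
  have hUclopen : IsClopen U := isClopen_biInter_finset fun s _ => s.2.1
  have haU : a' ∈ U := Set.mem_iInter₂.2 fun s _ => s.2.2
  have hUB : U ∩ B = ∅ := by
    rw [Set.eq_empty_iff_forall_notMem]
    rintro x ⟨hx1, hx2⟩
    exact ht ⟨x, hx2, hx1⟩
  -- push to `X`
  set U' : Set X := Subtype.val '' U with hU'
  have hU'F : U' ⊆ F := by rintro x ⟨u, _, rfl⟩; exact u.2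
  have hU'fr : ∀ x ∈ U', x ∉ frontier F := by
    rintro x ⟨u, hu, rfl⟩ hfr
    have : u ∈ U ∩ B := ⟨hu, hfr⟩
    rw [hUB] at this
    exact this
  have hU'int : U' ⊆ interior F := by
    intro x hx
    have hxF : x ∈ F := hU'F hx
    by_contra hxint
    exact hU'fr x hx ⟨subset_closure hxF, hxint⟩
  have hU'closed : IsClosed U' :=
    (hUclopen.1.isCompact.image continuous_subtype_val).isClosed
  obtain ⟨V, hVopen, hVpre⟩ := isOpen_induced_iff.mp hUclopen.2
  have hU'eq : U' = V ∩ interior F := by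
    apply Set.Subset.antisymm
    · rintro x hx
      obtain ⟨u, hu, rfl⟩ := hx
      refine ⟨?_, hU'int ⟨u, hu, rfl⟩⟩
      rw [← hVpre] at hu
      exact hu
    · rintro x ⟨hxV, hxint⟩
      have hxF : x ∈ F := interior_subset hxint
      refine ⟨⟨x, hxF⟩, ?_, rfl⟩
      rw [← hVpre]
      exact hxV
  have hU'open : IsOpen U' := hU'eq ▸ hVopen.inter isOpen_interior
  have := isClopen_iff.mp ⟨hU'closed, hU'open⟩
  rcases this with h | h
  · exact absurd (h ▸ ⟨a', haU, rfl⟩ : a ∈ (∅ : Set X)) (Set.notMem_empty a)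
  · obtain ⟨q, hq⟩ : ∃ q, q ∉ F := by
      by_contra hq
      push_neg at hq
      exact hFne (Set.eq_univ_of_forall hq)
    exact hq (hU'F (h ▸ Set.mem_univ q))

/-- Lower bound for `μH[1]` of a set whose distance-image contains an interval. -/
lemma meas_ge_of_Ioc {E : Type*} [NormedAddCommGroup E] [NormedSpace ℝ E]
    [MeasurableSpace E] [BorelSpace E] (x₀ : E) {S : Set E} {u v : ℝ}
    (h : Set.Ioc u v ⊆ (fun q => dist q x₀) '' S) :
    ENNReal.ofReal (v - u) ≤ μH[1] S := by
  have hlip : LipschitzWith 1 (fun q : E => dist q x₀) := LipschitzWith.dist_left x₀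
  have h2 := hlip.hausdorffMeasure_image_le (by norm_num : (0:ℝ) ≤ 1) S
  calc ENNReal.ofReal (v - u) = volume (Set.Ioc u v) := (Real.volume_Ioc).symm
    _ = μH[1] (Set.Ioc u v) := by rw [hausdorffMeasure_real]
    _ ≤ μH[1] ((fun q => dist q x₀) '' S) := measure_mono h
    _ ≤ 1 * μH[1] S := by simpa using h2
    _ = μH[1] S := one_mul _

set_option maxHeartbeats 1000000 in
/-- If `K` is closed connected with `H¹(K ∩ B(x₀,3r)) ≤ (11/10)(3r)`, `y, z` lie on
`K ∩ ∂B(x₀,r)` and `Γ ⊆ K` is a geodesic (length-minimizing compact connected curve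
in `K`) joining `y` and `z`, then `Γ ⊆ B(x₀,3r)` and consequently
`H¹(Γ) ≤ H¹(K ∩ B(x₀,3r)) ≤ 4r`. -/
theorem stmt5
    (K Γ : Set (EuclideanSpace ℝ (Fin 2))) (x₀ : EuclideanSpace ℝ (Fin 2)) (r : ℝ)
    (hr : 0 < r) (hK : IsClosed K) (hKconn : IsConnected K)
    (hdens : μH[1] (K ∩ Metric.ball x₀ (3*r)) ≤ ENNReal.ofReal ((11/10) * (3*r)))
    (y z : EuclideanSpace ℝ (Fin 2))
    (hy : y ∈ K ∩ Metric.sphere x₀ r) (hz : z ∈ K ∩ Metric.sphere x₀ r)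
    (hΓc : IsCompact Γ) (hΓconn : IsConnected Γ) (hΓK : Γ ⊆ K)
    (hyΓ : y ∈ Γ) (hzΓ : z ∈ Γ)
    (hmin : ∀ Γ' : Set (EuclideanSpace ℝ (Fin 2)),
      IsCompact Γ' → IsConnected Γ' → Γ' ⊆ K → y ∈ Γ' → z ∈ Γ' →
      μH[1] Γ ≤ μH[1] Γ') :
    Γ ⊆ Metric.ball x₀ (3*r) ∧
    μH[1] Γ ≤ μH[1] (K ∩ Metric.ball x₀ (3*r)) ∧
    μH[1] Γ ≤ ENNReal.ofReal (4 * r) := by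
  have hyd : dist y x₀ = r := mem_sphere.mp hy.2
  have hzd : dist z x₀ = r := mem_sphere.mp hz.2
  have hΓball : Γ ⊆ Metric.ball x₀ (3*r) := by
    intro w hwΓ
    by_contra hw
    have hwd : 3*r ≤ dist w x₀ := le_of_not_gt (fun h => hw (mem_ball.mpr h))
    haveI : CompactSpace Γ := isCompact_iff_compactSpace.mp hΓc
    haveI : ConnectedSpace Γ := Subtype.connectedSpace hΓconn
    set ρ : ℝ := 14/5*r with hρdef
    have hρr : r < ρ := by rw [hρdef]; linarith
    have hρ3r : ρ < 3*r := by rw [hρdef]; linarith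
    set F : Set Γ := Subtype.val ⁻¹' (Metric.closedBall x₀ ρ) with hFdef
    have hFclosed : IsClosed F := Metric.isClosed_closedBall.preimage continuous_subtype_val
    haveI : CompactSpace F := isCompact_iff_compactSpace.mp hFclosed.isCompact
    have hFne : F ≠ Set.univ := by
      intro hFu
      have h1 : (⟨w, hwΓ⟩ : Γ) ∈ F := hFu ▸ Set.mem_univ _
      simp only [hFdef, Set.mem_preimage, Metric.mem_closedBall] at h1
      linarith
    have hfr : frontier F ⊆ Subtype.val ⁻¹' (Metric.sphere x₀ ρ) := by
      intro x hx
      have h1 : x ∈ Subtype.val ⁻¹' (frontier (Metric.closedBall x₀ ρ)) :=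
        continuous_subtype_val.frontier_preimage_subset _ hx
      rwa [frontier_closedBall x₀ (by positivity : ρ ≠ 0)] at h1
    have hdistcont : Continuous (fun q : EuclideanSpace ℝ (Fin 2) => dist q x₀) :=
      continuous_id.dist continuous_const
    -- common facts about connected components in `F` of points on `∂B(x₀,r)`
    have comp : ∀ a : Γ, ∀ ha : a ∈ F, dist (a : EuclideanSpace ℝ (Fin 2)) x₀ = r →
        IsCompact (Subtype.val '' connectedComponentIn F a) ∧
        IsConnected (Subtype.val '' connectedComponentIn F a) ∧
        (Subtype.val '' connectedComponentIn F a) ⊆ Γ ∩ Metric.closedBall x₀ ρ ∧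
        (a : EuclideanSpace ℝ (Fin 2)) ∈ Subtype.val '' connectedComponentIn F a ∧
        ENNReal.ofReal (ρ - r) ≤ μH[1] (Subtype.val '' connectedComponentIn F a) := by
      intro a ha had
      have hcompact : IsCompact (Subtype.val '' connectedComponentIn F a) := by
        have h1 : IsCompact (connectedComponentIn F a) := by
          rw [connectedComponentIn_eq_image ha]
          exact (isClosed_connectedComponent.isCompact).image continuous_subtype_val
        exact h1.image continuous_subtype_val
      have hconn : IsConnected (Subtype.val '' connectedComponentIn F a) :=
        (isConnected_connectedComponentIn_iff.mpr ha).image _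
          continuous_subtype_val.continuousOn
      have hsub : (Subtype.val '' connectedComponentIn F a) ⊆ Γ ∩ Metric.closedBall x₀ ρ := by
        rintro x ⟨u, hu, rfl⟩
        have := connectedComponentIn_subset F a hu
        rw [hFdef] at this
        exact ⟨u.2, this⟩
      have hamem : (a : EuclideanSpace ℝ (Fin 2)) ∈ Subtype.val '' connectedComponentIn F a :=
        Set.mem_image_of_mem _ (mem_connectedComponentIn ha)
      refine ⟨hcompact, hconn, hsub, hamem, ?_⟩
      obtain ⟨b, hb, hbfr⟩ := bump_lemma hFclosed hFne ha
      have hbd : dist (b : EuclideanSpace ℝ (Fin 2)) x₀ = ρ := mem_sphere.mp (hfr hbfr)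
      have hIcc : Set.Icc r ρ ⊆
          (fun q => dist q x₀) '' (Subtype.val '' connectedComponentIn F a) := by
        refine (hconn.image _ hdistcont.continuousOn).isPreconnected.Icc_subset ?_ ?_
        · exact ⟨(a : EuclideanSpace ℝ (Fin 2)), hamem, had⟩
        · exact ⟨(b : EuclideanSpace ℝ (Fin 2)), ⟨b, hb, rfl⟩, hbd⟩
      exact meas_ge_of_Ioc x₀ (Set.Ioc_subset_Icc_self.trans hIcc)
    have hyF : (⟨y, hyΓ⟩ : Γ) ∈ F := by
      simp only [hFdef, Set.mem_preimage, Metric.mem_closedBall]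
      linarith [hyd.le, hyd.ge]
    have hzF : (⟨z, hzΓ⟩ : Γ) ∈ F := by
      simp only [hFdef, Set.mem_preimage, Metric.mem_closedBall]
      linarith [hzd.le, hzd.ge]
    obtain ⟨hCyc, hCyconn, hCysub, hyCy, hCymeas⟩ := comp ⟨y, hyΓ⟩ hyF hyd
    by_cases hcase : (⟨z, hzΓ⟩ : Γ) ∈ connectedComponentIn F ⟨y, hyΓ⟩
    · -- same component : contradict minimality
      set Γ' : Set (EuclideanSpace ℝ (Fin 2)) :=
        Subtype.val '' connectedComponentIn F ⟨y, hyΓ⟩ with hΓ'def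
      have hzΓ' : z ∈ Γ' := ⟨⟨z, hzΓ⟩, hcase, rfl⟩
      have hΓ'K : Γ' ⊆ K := fun x hx => hΓK (hCysub hx).1
      have hm := hmin Γ' hCyc hCyconn hΓ'K hyCy hzΓ'
      set ρ' : ℝ := 29/10*r with hρ'def
      set D : Set (EuclideanSpace ℝ (Fin 2)) := Γ ∩ (Metric.closedBall x₀ ρ')ᶜ with hDdef
      have hDmeas : MeasurableSet D :=
        hΓc.isClosed.measurableSet.inter Metric.isClosed_closedBall.measurableSet.compl
      have hDdisj : Disjoint Γ' D := by
        rw [Set.disjoint_left]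
        intro x hxΓ' hxD
        have h1 : dist x x₀ ≤ ρ := mem_closedBall.mp (hCysub hxΓ').2
        exact hxD.2 (mem_closedBall.mpr (by rw [hρ'def]; rw [hρdef] at h1; linarith))
      have hDlow : ENNReal.ofReal (3*r - ρ') ≤ μH[1] D := by
        apply meas_ge_of_Ioc x₀
        intro t ht
        have himg : Set.Icc r (dist w x₀) ⊆ (fun q => dist q x₀) '' Γ :=
          (hΓconn.image _ hdistcont.continuousOn).isPreconnected.Icc_subset
            ⟨y, hyΓ, hyd⟩ ⟨w, hwΓ, rfl⟩
        have ht1 : ρ' < t := ht.1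
        have htIcc : t ∈ Set.Icc r (dist w x₀) :=
          ⟨by rw [hρ'def] at ht1; linarith, le_trans ht.2 hwd⟩
        obtain ⟨q, hq, hqd⟩ := himg htIcc
        refine ⟨q, ⟨hq, fun hc => ?_⟩, hqd⟩
        have h3 : dist q x₀ ≤ ρ' := mem_closedBall.mp hc
        have hqd' : dist q x₀ = t := hqd
        linarith
      have hΓ'fin : μH[1] Γ' ≠ ⊤ := by
        have hsub : Γ' ⊆ K ∩ Metric.ball x₀ (3*r) := fun x hx =>
          ⟨hΓ'K hx, mem_ball.mpr (lt_of_le_of_lt (mem_closedBall.mp (hCysub hx).2) hρ3r)⟩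
        exact ne_top_of_le_ne_top ENNReal.ofReal_ne_top ((measure_mono hsub).trans hdens)
      have hunion : μH[1] Γ' + μH[1] D ≤ μH[1] Γ := by
        rw [← measure_union hDdisj hDmeas]
        exact measure_mono (Set.union_subset (fun x hx => (hCysub hx).1) Set.inter_subset_left)
      have hfinal : μH[1] Γ' + ENNReal.ofReal (3*r - ρ') ≤ μH[1] Γ' + 0 := by
        rw [add_zero]
        calc μH[1] Γ' + ENNReal.ofReal (3*r - ρ') ≤ μH[1] Γ' + μH[1] D :=
              add_le_add_right hDlow _
          _ ≤ μH[1] Γ := hunion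
          _ ≤ μH[1] Γ' := hm
      have := (ENNReal.add_le_add_iff_left hΓ'fin).mp hfinal
      have h0 : ENNReal.ofReal (3*r - ρ') = 0 := le_antisymm (le_of_le_of_eq this rfl) (zero_le)
      rw [ENNReal.ofReal_eq_zero, hρ'def] at h0
      linarith
    · -- different components : contradict the density bound
      obtain ⟨hCzc, hCzconn, hCzsub, hzCz, hCzmeas⟩ := comp ⟨z, hzΓ⟩ hzF hzd
      have hdisj : Disjoint (Subtype.val '' connectedComponentIn F ⟨y, hyΓ⟩)
          (Subtype.val '' connectedComponentIn F ⟨z, hzΓ⟩) := by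
        rw [Set.disjoint_left]
        rintro x ⟨u, hu, rfl⟩ ⟨u', hu', hval⟩
        have huu : u' = u := Subtype.ext hval
        subst huu
        have e1 := connectedComponentIn_eq hu
        have e2 := connectedComponentIn_eq hu'
        exact hcase (by rw [e1, ← e2]; exact mem_connectedComponentIn hzF)
      have hsubK : ∀ a : Γ, Subtype.val '' connectedComponentIn F a ⊆ Γ ∩ Metric.closedBall x₀ ρ →
          Subtype.val '' connectedComponentIn F a ⊆ K ∩ Metric.ball x₀ (3*r) := by
        intro a hsub x hx
        exact ⟨hΓK (hsub hx).1, mem_ball.mpr (lt_of_le_of_lt (mem_closedBall.mp (hsub hx).2) hρ3r)⟩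
      have hsum : ENNReal.ofReal (ρ - r) + ENNReal.ofReal (ρ - r) ≤
          μH[1] (K ∩ Metric.ball x₀ (3*r)) := by
        calc ENNReal.ofReal (ρ - r) + ENNReal.ofReal (ρ - r)
            ≤ μH[1] (Subtype.val '' connectedComponentIn F ⟨y, hyΓ⟩) +
              μH[1] (Subtype.val '' connectedComponentIn F ⟨z, hzΓ⟩) := add_le_add hCymeas hCzmeas
          _ = μH[1] ((Subtype.val '' connectedComponentIn F ⟨y, hyΓ⟩) ∪
              (Subtype.val '' connectedComponentIn F ⟨z, hzΓ⟩)) :=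
              (measure_union hdisj hCzc.isClosed.measurableSet).symm
          _ ≤ μH[1] (K ∩ Metric.ball x₀ (3*r)) := measure_mono
              (Set.union_subset (hsubK _ hCysub) (hsubK _ hCzsub))
      have hle := hsum.trans hdens
      rw [← ENNReal.ofReal_add (by linarith) (by linarith)] at hle
      rw [ENNReal.ofReal_le_ofReal_iff (by linarith)] at hle
      rw [hρdef] at hle
      linarith
  have hsub : Γ ⊆ K ∩ Metric.ball x₀ (3*r) := fun x hx => ⟨hΓK hx, hΓball hx⟩
  refine ⟨hΓball, measure_mono hsub, ?_⟩
  exact le_trans ((measure_mono hsub).trans hdens) (ENNReal.ofReal_le_ofReal (by linarith))
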